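/- arXiv:1606.06414 — 2 statements merged into one kernel-verified Lean document; each statement's English description precedes it below -/
import Mathlib

section
/- Let t_k > 0 satisfy 1 ≥ (β₁−τ)·K·exp[α₀ t_k² (4 log k / A)² − (4−a) log k − 2 log t_k] for all k ∈ N, where β₁ − τ, K, α₀, A > 0 and 0 ≤ a < 4. Then the sequence {t_k} is bounded. -/
open Real

/-- If `t_k > 0` satisfies, for all `k ≥ 2`,
`1 ≥ (β₁-τ) K exp(α₀ t_k² (4 log k / A)² - (4-a) log k - 2 log t_k)`,
with `β₁ > τ > 0`, `K > 0`, `α₀ > 0`, `A > 0`, `0 ≤ a < 4`, then `{t_k}` is bounded. -/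
theorem tk_bounded (β₁ τ K α₀ A a : ℝ) (hτ : 0 < τ) (hβτ : τ < β₁) (hK : 0 < K)
    (hα₀ : 0 < α₀) (hA : 0 < A) (ha0 : 0 ≤ a) (ha4 : a < 4)
    (t : ℕ → ℝ) (ht : ∀ k : ℕ, 0 < t k)
    (hineq : ∀ k : ℕ, 2 ≤ k →
      (β₁ - τ) * K *
        exp (α₀ * (t k) ^ 2 * (4 * log k / A) ^ 2 - (4 - a) * log k - 2 * log (t k)) ≤ 1) :
    ∃ M : ℝ, ∀ k : ℕ, t k ≤ M := by
  have hβK : 0 < (β₁ - τ) * K := mul_pos (by linarith) hK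
  obtain ⟨C, hCdef⟩ : ∃ x : ℝ, x = 1 / ((β₁ - τ) * K) := ⟨_, rfl⟩
  have hC : 0 < C := by rw [hCdef]; positivity
  obtain ⟨b, hbdef⟩ : ∃ x : ℝ, x = 16 * α₀ / A ^ 2 := ⟨_, rfl⟩
  have hb : 0 < b := by rw [hbdef]; positivity
  have hlog2 : (0:ℝ) < log 2 := log_pos (by norm_num)
  obtain ⟨ε, hεdef⟩ : ∃ x : ℝ, x = b * (log 2) ^ 2 / 2 := ⟨_, rfl⟩
  have hε : 0 < ε := by rw [hεdef]; positivity
  obtain ⟨S, hSdef⟩ : ∃ x : ℝ,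
      x = max (8 / (b * log 2)) ((2 / ε) * (|log C| + |log (ε / 2)| + 1) + 1) := ⟨_, rfl⟩
  have hS1 : 8 / (b * log 2) ≤ S := hSdef ▸ le_max_left _ _
  have hS2 : (2 / ε) * (|log C| + |log (ε / 2)| + 1) + 1 ≤ S := hSdef ▸ le_max_right _ _
  have hS0 : 0 < S := lt_of_lt_of_le (by positivity) hS1
  refine ⟨max (Real.sqrt S) (max (t 0) (t 1)), fun k => ?_⟩
  match k with
  | 0 => exact le_trans (le_max_left _ _) (le_max_right _ _)
  | 1 => exact le_trans (le_max_right _ _) (le_max_right _ _)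
  | (n+2) =>
    refine le_trans ?_ (le_max_left _ _)
    by_contra hcon
    push_neg at hcon
    set m : ℕ := n + 2 with hm
    have htm : 0 < t m := ht m
    have ht2 : S < (t m) ^ 2 := by
      have hs := Real.sq_sqrt hS0.le
      nlinarith [Real.sqrt_nonneg S]
    set L : ℝ := log (m : ℝ) with hLdef
    have hL : log 2 ≤ L := by
      apply Real.log_le_log (by norm_num)
      exact_mod_cast (by omega : 2 ≤ m)
    have hL0 : 0 < L := lt_of_lt_of_le hlog2 hL
    -- rewrite main term
    have h1 : α₀ * (t m) ^ 2 * (4 * L / A) ^ 2 = b * (t m) ^ 2 * L ^ 2 := by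
      rw [hbdef]; field_simp; ring
    -- bound on 2 log t
    have h2 : 2 * log (t m) ≤ (ε / 2) * (t m) ^ 2 - 1 - log (ε / 2) := by
      have hpos : (0:ℝ) < (ε / 2) * (t m) ^ 2 := by positivity
      have hle := Real.log_le_sub_one_of_pos hpos
      have hlm : log ((ε / 2) * (t m) ^ 2) = log (ε / 2) + 2 * log (t m) := by
        rw [Real.log_mul (by positivity) (by positivity), Real.log_pow]
        push_cast; ring
      linarith [hlm ▸ hle]
    -- (b/2) t² L ≥ 4
    have h3 : (4:ℝ) ≤ (b / 2) * (t m) ^ 2 * L := by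
      have h8 : 8 ≤ b * log 2 * S := by
        rw [div_le_iff₀ (by positivity)] at hS1; linarith
      have hbt : b * log 2 * S < b * log 2 * (t m) ^ 2 :=
        mul_lt_mul_of_pos_left ht2 (by positivity)
      have hL2 : b * log 2 * (t m) ^ 2 ≤ b * L * (t m) ^ 2 := by
        have h0 : 0 ≤ b * (L - log 2) * (t m) ^ 2 :=
          mul_nonneg (mul_nonneg hb.le (by linarith)) (sq_nonneg _)
        have hid : b * (L - log 2) * (t m) ^ 2 =
            b * L * (t m) ^ 2 - b * log 2 * (t m) ^ 2 := by ring
        linarith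
      have hid2 : (b / 2) * (t m) ^ 2 * L = b * L * (t m) ^ 2 / 2 := by ring
      linarith
    -- ε t² ≤ (b/2) t² L²
    have h4 : ε * (t m) ^ 2 ≤ (b / 2) * (t m) ^ 2 * L ^ 2 := by
      have h0 : 0 ≤ (b / 2) * (t m) ^ 2 * (L ^ 2 - (log 2) ^ 2) := by
        apply mul_nonneg (by positivity); nlinarith
      have : ε * (t m) ^ 2 = (b / 2) * (t m) ^ 2 * (log 2) ^ 2 := by
        rw [hεdef]; ring
      linarith
    -- the second half dominates (4-a) L
    have h5 : (4 - a) * L ≤ (b / 2) * (t m) ^ 2 * L ^ 2 := by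
      have h4L := mul_le_mul_of_nonneg_right h3 hL0.le
      have haL0 : 0 ≤ a * L := mul_nonneg ha0 hL0.le
      have hid1 : (4 - a) * L = 4 * L - a * L := by ring
      have hid2 : (b / 2) * (t m) ^ 2 * L * L = (b / 2) * (t m) ^ 2 * L ^ 2 := by ring
      linarith
    -- ε t² / 2 is large
    have h6 : log C + 2 * log (t m) + (4 - a) * L < b * (t m) ^ 2 * L ^ 2 := by
      have hεS : |log C| + |log (ε / 2)| + 1 + ε / 2 ≤ (ε / 2) * S := by
        have hmul := mul_le_mul_of_nonneg_left hS2 (by positivity : (0:ℝ) ≤ ε / 2)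
        have hid : (ε / 2) * ((2 / ε) * (|log C| + |log (ε / 2)| + 1) + 1) =
            |log C| + |log (ε / 2)| + 1 + ε / 2 := by field_simp
        linarith
      have hεt : (ε / 2) * S < (ε / 2) * (t m) ^ 2 :=
        mul_lt_mul_of_pos_left ht2 (by positivity)
      have habs1 : log C ≤ |log C| := le_abs_self _
      have habs2 : -log (ε / 2) ≤ |log (ε / 2)| := neg_le_abs _
      have hsplit : b * (t m) ^ 2 * L ^ 2 =
          (b / 2) * (t m) ^ 2 * L ^ 2 + (b / 2) * (t m) ^ 2 * L ^ 2 := by ring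
      linarith
    have hE : log C < α₀ * (t m) ^ 2 * (4 * L / A) ^ 2 - (4 - a) * L - 2 * log (t m) := by
      rw [h1]; linarith
    have hexp : C < exp (α₀ * (t m) ^ 2 * (4 * L / A) ^ 2 - (4 - a) * L - 2 * log (t m)) := by
      calc C = exp (log C) := (Real.exp_log hC).symm
        _ < _ := Real.exp_lt_exp.mpr hE
    have hfin := hineq m (by omega)
    have h1C : (β₁ - τ) * K * C = 1 := by
      rw [hCdef]; field_simp; exact div_self (sub_pos.mpr hβτ).ne'
    have := mul_lt_mul_of_pos_left hexp hβK
    linarith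
end

section
/- (Converse of Vitali's theorem) Let (X, F, μ) be a finite measure space and f_n ∈ L¹(X, μ) such that lim_{n→∞} ∫_E f_n dμ exists for every E ∈ F. Then {f_n} is uniformly integrable. -/
open MeasureTheory Filter Set
open scoped symmDiff ENNReal NNReal Topology
set_option synthInstance.maxHeartbeats 1000000
set_option maxHeartbeats 2000000

section VCaux

variable {X : Type*} [MeasurableSpace X] {μ : Measure X}

/-- absolute continuity of a single integrable function, with real δ -/
theorem vc_abs_cont {f : X → ℝ} (hf : Integrable f μ) {ε : ℝ} (hε : 0 < ε) :
    ∃ δ : ℝ, 0 < δ ∧ ∀ E : Set X, μ E ≤ ENNReal.ofReal δ → ∫ x in E, |f x| ∂μ ≤ ε := by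
  obtain ⟨dD, hdDpos, hdD⟩ := exists_pos_setLIntegral_lt_of_measure_lt
    (f := fun x => (‖f x‖₊ : ℝ≥0∞)) hf.2.ne (ε := ENNReal.ofReal ε)
    (by simpa using hε)
  obtain ⟨r, hr0, hrpos, hrlt⟩ := ENNReal.lt_iff_exists_real_btwn.mp hdDpos
  refine ⟨r, by simpa using hrpos, fun E hE => ?_⟩
  have hlt := hdD E (lt_of_le_of_lt hE hrlt)
  have h1 : ∫ x in E, |f x| ∂μ = (∫⁻ x in E, ‖f x‖₊ ∂μ).toReal := by
    simp_rw [← enorm_eq_nnnorm]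
    rw [← integral_norm_eq_lintegral_enorm (hf.1.restrict (s := E))]
    simp [Real.norm_eq_abs]
  rw [h1]
  calc (∫⁻ x in E, ‖f x‖₊ ∂μ).toReal ≤ (ENNReal.ofReal ε).toReal :=
        ENNReal.toReal_mono (by simp) hlt.le
    _ = ε := ENNReal.toReal_ofReal hε.le

theorem vc_split {f : X → ℝ} (hf : Integrable f μ) {A B : Set X}
    (hA : MeasurableSet A) (hB : MeasurableSet B) :
    ∫ x in A, f x ∂μ = (∫ x in A \ B, f x ∂μ) + ∫ x in A ∩ B, f x ∂μ := by
  have hd : Disjoint (A \ B) (A ∩ B) :=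
    Set.disjoint_sdiff_left.mono_right Set.inter_subset_right
  rw [← setIntegral_union hd (hA.inter hB) hf.integrableOn hf.integrableOn,
    Set.diff_union_inter]

theorem vc_diff_le {f : X → ℝ} (hf : Integrable f μ) {A B : Set X}
    (hA : MeasurableSet A) (hB : MeasurableSet B) :
    |(∫ x in A, f x ∂μ) - ∫ x in B, f x ∂μ| ≤ ∫ x in A ∆ B, |f x| ∂μ := by
  have h1 := vc_split hf hA hB
  have h2 := vc_split hf hB hA
  rw [Set.inter_comm B A] at h2
  have h3 : (∫ x in A, f x ∂μ) - ∫ x in B, f x ∂μ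
      = (∫ x in A \ B, f x ∂μ) - ∫ x in B \ A, f x ∂μ := by
    rw [h1, h2]; ring
  have habs : ∀ C : Set X, |∫ x in C, f x ∂μ| ≤ ∫ x in C, |f x| ∂μ := by
    intro C
    simpa [Real.norm_eq_abs] using
      norm_integral_le_integral_norm (μ := μ.restrict C) (f := f)
  have hd : Disjoint (A \ B) (B \ A) := disjoint_sdiff_sdiff
  have hu : ∫ x in A ∆ B, |f x| ∂μ
      = (∫ x in A \ B, |f x| ∂μ) + ∫ x in B \ A, |f x| ∂μ := by
    rw [Set.symmDiff_def, setIntegral_union hd (hB.diff hA) hf.abs.integrableOn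
      hf.abs.integrableOn]
  rw [h3, hu]
  calc |(∫ x in A \ B, f x ∂μ) - ∫ x in B \ A, f x ∂μ|
      ≤ |∫ x in A \ B, f x ∂μ| + |∫ x in B \ A, f x ∂μ| := abs_sub _ _
    _ ≤ _ := add_le_add (habs _) (habs _)

theorem vc_eLpNorm_ind {A B : Set X} (hA : MeasurableSet A) (hB : MeasurableSet B) :
    eLpNorm ((A.indicator fun _ => (1 : ℝ)) - B.indicator fun _ => (1 : ℝ)) 1 μ
      = μ (A ∆ B) := by
  rw [eLpNorm_one_eq_lintegral_enorm]
  have hpt : ∀ x, (‖(A.indicator (fun _ => (1:ℝ)) - B.indicator fun _ => (1:ℝ)) x‖₊ : ℝ≥0∞)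
      = (A ∆ B).indicator (fun _ => (1 : ℝ≥0∞)) x := by
    intro x
    by_cases hxA : x ∈ A <;> by_cases hxB : x ∈ B <;>
      simp [Set.indicator_apply, hxA, hxB, Set.mem_symmDiff, Pi.sub_apply]
  simp_rw [enorm_eq_nnnorm, hpt]
  rw [lintegral_indicator (hA.symmDiff hB)]
  simp

theorem vc_restrict_congr {A B : Set X}
    (h : (A.indicator fun _ => (1 : ℝ)) =ᵐ[μ] B.indicator fun _ => (1 : ℝ)) :
    μ.restrict A = μ.restrict B := by
  apply Measure.restrict_congr_set
  have hsub : A ∆ B ⊆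
      {x | ¬ (A.indicator (fun _ => (1:ℝ)) x = B.indicator (fun _ => (1:ℝ)) x)} := by
    intro x hx
    rcases Set.mem_symmDiff.mp hx with ⟨h1, h2⟩ | ⟨h1, h2⟩ <;>
      simp [Set.indicator_apply, h1, h2]
  have hnull : μ (A ∆ B) = 0 := measure_mono_null hsub h
  rw [Set.symmDiff_def] at hnull
  have := measure_union_null_iff.mp hnull
  exact MeasureTheory.ae_eq_set.mpr ⟨this.1, this.2⟩

/-- the set of indicator-type elements of `L¹`. -/
def vcS (μ : Measure X) : Set (Lp ℝ 1 μ) :=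
  {g | ∃ E : Set X, MeasurableSet E ∧ ⇑g =ᵐ[μ] E.indicator fun _ => (1 : ℝ)}

theorem vc_dist {g h : Lp ℝ 1 μ} {A B : Set X} (hA : MeasurableSet A) (hB : MeasurableSet B)
    (hg : ⇑g =ᵐ[μ] A.indicator fun _ => (1:ℝ)) (hh : ⇑h =ᵐ[μ] B.indicator fun _ => (1:ℝ)) :
    dist g h = (μ (A ∆ B)).toReal := by
  rw [Lp.dist_def, ← vc_eLpNorm_ind hA hB]
  congr 1
  apply eLpNorm_congr_ae
  filter_upwards [Lp.coeFn_sub g h, hg, hh] with x h1 h2 h3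
  simp only [h1, Pi.sub_apply, h2, h3]

theorem vcS_closed [IsFiniteMeasure μ] : IsClosed (vcS μ) := by
  haveI : Fact ((1:ℝ≥0∞) ≤ 1) := ⟨le_rfl⟩
  refine IsSeqClosed.isClosed ?_
  intro g gl hg hglim
  have htm : TendstoInMeasure μ (fun j => ⇑(g j)) atTop ⇑gl :=
    tendstoInMeasure_of_tendsto_Lp hglim
  obtain ⟨ns, -, hae⟩ := htm.exists_seq_tendsto_ae
  have h01 : ∀ᵐ x ∂μ, ∀ j, g (ns j) x = 0 ∨ g (ns j) x = 1 := by
    rw [ae_all_iff]; intro j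
    obtain ⟨E, hE, hEeq⟩ := hg (ns j)
    filter_upwards [hEeq] with x hx
    by_cases hxE : x ∈ E <;> simp [hx, Set.indicator_apply, hxE]
  have hgl01 : ∀ᵐ x ∂μ, gl x = 0 ∨ gl x = 1 := by
    filter_upwards [h01, hae] with x hx hlimx
    have hmem : ∀ j, g (ns j) x ∈ ({0, 1} : Set ℝ) := by
      intro j; rcases hx j with h | h <;> simp [h]
    have hcl : IsClosed ({0, 1} : Set ℝ) :=
      (isClosed_singleton (x := (0:ℝ))).union (isClosed_singleton (x := (1:ℝ)))
    have : gl x ∈ ({0, 1} : Set ℝ) :=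
      hcl.mem_of_tendsto hlimx (Eventually.of_forall hmem)
    simpa using this
  refine ⟨(⇑gl) ⁻¹' {1}, ?_, ?_⟩
  · exact (Lp.stronglyMeasurable gl).measurable (measurableSet_singleton 1)
  · filter_upwards [hgl01] with x hx
    rcases hx with h0 | h1
    · simp [Set.indicator_apply, Set.mem_preimage, h0]
    · simp [Set.indicator_apply, Set.mem_preimage, h1]

/-- the "uniform Cauchy tail" sets. -/
def vcF (μ : Measure X) (fs : ℕ → X → ℝ) (e : ℝ) (k : ℕ) : Set (Lp ℝ 1 μ) :=
  {g | ∀ E : Set X, MeasurableSet E → (⇑g =ᵐ[μ] E.indicator fun _ => (1:ℝ)) →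
    ∀ m n : ℕ, k ≤ m → k ≤ n →
      |(∫ x in E, fs n x ∂μ) - ∫ x in E, fs m x ∂μ| ≤ e}

end VCaux

/-- **Converse of Vitali's theorem.** On a finite measure space, if
`f_n ∈ L¹(μ)` and `lim_n ∫_E f_n dμ` exists for every measurable `E`, then `{f_n}` is
uniformly integrable: for every `ε > 0` there is `δ > 0` such that `μ E ≤ δ` implies
`∫_E |f_n| dμ ≤ ε` for all `n`. -/
theorem vitali_converse {X : Type*} [MeasurableSpace X] (μ : Measure X)
    [IsFiniteMeasure μ] (fs : ℕ → X → ℝ)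
    (hint : ∀ n, Integrable (fs n) μ)
    (hlim : ∀ E : Set X, MeasurableSet E →
      ∃ L : ℝ, Tendsto (fun n => ∫ x in E, fs n x ∂μ) atTop (nhds L)) :
    ∀ ε : ℝ, 0 < ε → ∃ δ : ℝ, 0 < δ ∧ ∀ E : Set X, MeasurableSet E →
      μ E ≤ ENNReal.ofReal δ → ∀ n, (∫ x in E, |fs n x| ∂μ) ≤ ε := by
  intro ε hε
  haveI : Fact ((1:ℝ≥0∞) ≤ 1) := ⟨le_rfl⟩
  set ε₀ := ε / 6 with hε₀def
  have hε₀ : 0 < ε₀ := by positivity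
  haveI hScomplete : CompleteSpace (vcS μ) := vcS_closed.completeSpace_coe
  haveI : Nonempty (vcS μ) :=
    ⟨⟨indicatorConstLp 1 MeasurableSet.empty (measure_ne_top μ ∅) (1:ℝ),
      ∅, MeasurableSet.empty, indicatorConstLp_coeFn⟩⟩
  set T : ℕ → Set (vcS μ) := fun k => {g | (g : Lp ℝ 1 μ) ∈ vcF μ fs ε₀ k} with hTdef
  -- the T k are closed
  have hTclosed : ∀ k, IsClosed (T k) := by
    intro k
    refine IsSeqClosed.isClosed ?_
    intro g gl hgmem hglim
    intro E hEmeas hEeq m n hm hn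
    choose A hAmeas hAeq using fun j => (g j).2
    have hdist : Tendsto (fun j => dist ((g j : Lp ℝ 1 μ)) ((gl : Lp ℝ 1 μ))) atTop (𝓝 0) := by
      have h := tendsto_iff_dist_tendsto_zero.mp hglim
      simpa [Subtype.dist_eq] using h
    refine le_of_forall_pos_le_add ?_
    intro η hη
    obtain ⟨δ', hδ'pos, hδ'⟩ := vc_abs_cont
      (f := fun x => |fs n x| + |fs m x|) ((hint n).abs.add (hint m).abs) hη
    obtain ⟨J, hJ⟩ := (Metric.tendsto_atTop.mp hdist) δ' hδ'pos
    have hlt : dist ((g J : Lp ℝ 1 μ)) ((gl : Lp ℝ 1 μ)) < δ' := by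
      have := hJ J le_rfl
      rwa [Real.dist_eq, sub_zero, abs_of_nonneg dist_nonneg] at this
    have hdeq : dist ((g J : Lp ℝ 1 μ)) ((gl : Lp ℝ 1 μ)) = (μ (A J ∆ E)).toReal :=
      vc_dist (hAmeas J) hEmeas (hAeq J) hEeq
    have hμs : μ (A J ∆ E) ≤ ENNReal.ofReal δ' := by
      refine le_of_lt ((ENNReal.lt_ofReal_iff_toReal_lt (measure_ne_top μ _)).mpr ?_)
      rw [← hdeq]; exact hlt
    have hsum : (∫ x in A J ∆ E, |fs n x| ∂μ) + (∫ x in A J ∆ E, |fs m x| ∂μ) ≤ η := by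
      have h1 : ∫ x in A J ∆ E, |(|fs n x| + |fs m x|)| ∂μ ≤ η := hδ' _ hμs
      have h2 : (fun x => |(|fs n x| + |fs m x|)|) = fun x => |fs n x| + |fs m x| :=
        funext fun x => abs_of_nonneg (by positivity)
      rw [h2] at h1
      rwa [← integral_add (hint n).abs.integrableOn (hint m).abs.integrableOn]
    have hcauchy : |(∫ x in A J, fs n x ∂μ) - ∫ x in A J, fs m x ∂μ| ≤ ε₀ :=
      hgmem J (A J) (hAmeas J) (hAeq J) m n hm hn
    have hdn : |(∫ x in A J, fs n x ∂μ) - ∫ x in E, fs n x ∂μ|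
        ≤ ∫ x in A J ∆ E, |fs n x| ∂μ := vc_diff_le (hint n) (hAmeas J) hEmeas
    have hdm : |(∫ x in A J, fs m x ∂μ) - ∫ x in E, fs m x ∂μ|
        ≤ ∫ x in A J ∆ E, |fs m x| ∂μ := vc_diff_le (hint m) (hAmeas J) hEmeas
    calc |(∫ x in E, fs n x ∂μ) - ∫ x in E, fs m x ∂μ|
        ≤ |(∫ x in E, fs n x ∂μ) - ∫ x in A J, fs n x ∂μ|
          + |(∫ x in A J, fs n x ∂μ) - ∫ x in A J, fs m x ∂μ|
          + |(∫ x in A J, fs m x ∂μ) - ∫ x in E, fs m x ∂μ| := by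
            have := abs_sub_le (∫ x in E, fs n x ∂μ) (∫ x in A J, fs n x ∂μ)
              (∫ x in E, fs m x ∂μ)
            have h2 := abs_sub_le (∫ x in A J, fs n x ∂μ) (∫ x in A J, fs m x ∂μ)
              (∫ x in E, fs m x ∂μ)
            linarith
      _ ≤ (∫ x in A J ∆ E, |fs n x| ∂μ) + ε₀ + ∫ x in A J ∆ E, |fs m x| ∂μ := by
            rw [abs_sub_comm (∫ x in E, fs n x ∂μ)]
            exact add_le_add (add_le_add hdn hcauchy) hdm
      _ ≤ ε₀ + η := by linarith
  -- the T k cover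
  have hTcover : ⋃ k, T k = Set.univ := by
    ext g
    simp only [Set.mem_iUnion, Set.mem_univ, iff_true]
    obtain ⟨E, hEm, hEeq⟩ := g.2
    obtain ⟨L, hL⟩ := hlim E hEm
    rw [Metric.tendsto_atTop] at hL
    obtain ⟨N, hN⟩ := hL (ε₀ / 2) (by positivity)
    refine ⟨N, ?_⟩
    intro E' hE'm hE'eq m n hm hn
    have hres : μ.restrict E' = μ.restrict E :=
      vc_restrict_congr (hE'eq.symm.trans hEeq)
    have hn' := hN n hn
    have hm' := hN m hm
    rw [Real.dist_eq] at hn' hm'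
    have hE'n : (∫ x in E', fs n x ∂μ) = ∫ x in E, fs n x ∂μ := by rw [hres]
    have hE'm2 : (∫ x in E', fs m x ∂μ) = ∫ x in E, fs m x ∂μ := by rw [hres]
    rw [hE'n, hE'm2]
    calc |(∫ x in E, fs n x ∂μ) - ∫ x in E, fs m x ∂μ|
        ≤ |(∫ x in E, fs n x ∂μ) - L| + |L - ∫ x in E, fs m x ∂μ| := abs_sub_le _ _ _
      _ ≤ ε₀ / 2 + ε₀ / 2 := by
          rw [abs_sub_comm L]
          exact add_le_add hn'.le hm'.le
      _ = ε₀ := by ring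
  -- Baire category
  obtain ⟨k, g₀, hg₀⟩ := nonempty_interior_of_iUnion_of_closed hTclosed hTcover
  obtain ⟨r, hr, hball⟩ := Metric.mem_nhds_iff.mp (mem_interior_iff_mem_nhds.mp hg₀)
  obtain ⟨E₀, hE₀, hg₀eq⟩ := g₀.2
  have hball' : ∀ (B : Set X) (hB : MeasurableSet B),
      (μ (B ∆ E₀)).toReal < r → ∀ m n : ℕ, k ≤ m → k ≤ n →
        |(∫ x in B, fs n x ∂μ) - ∫ x in B, fs m x ∂μ| ≤ ε₀ := by
    intro B hB hdist m n hm hn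
    have hmem : (⟨indicatorConstLp 1 hB (measure_ne_top μ B) (1:ℝ),
        B, hB, indicatorConstLp_coeFn⟩ : vcS μ) ∈ Metric.ball g₀ r := by
      rw [Metric.mem_ball, Subtype.dist_eq]
      rw [vc_dist hB hE₀ indicatorConstLp_coeFn hg₀eq]
      exact hdist
    exact hball hmem B hB (indicatorConstLp_coeFn (hs := hB) (hμs := measure_ne_top μ B)) m n hm hn
  -- δ handling the first k+1 functions
  choose δf hδfpos hδf using fun j => vc_abs_cont (f := fs j) (hint j) hε₀
  have hne : (Finset.range (k+1)).Nonempty := ⟨0, by simp⟩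
  set δ₂ := (Finset.range (k+1)).inf' hne δf with hδ₂def
  set δ := min δ₂ (r / 2) with hδdef
  have hδpos : 0 < δ := lt_min ((Finset.lt_inf'_iff hne).mpr fun j _ => hδfpos j)
    (by positivity)
  refine ⟨δ, hδpos, fun E hE hμE n => ?_⟩
  have hsmall : ∀ j, j ≤ k → ∀ E' : Set X, μ E' ≤ ENNReal.ofReal δ →
      ∫ x in E', |fs j x| ∂μ ≤ ε₀ := by
    intro j hj E' hμE'
    refine hδf j E' (le_trans hμE' (ENNReal.ofReal_le_ofReal ?_))
    exact le_trans (min_le_left _ _) (Finset.inf'_le δf (by simp [Nat.lt_succ_iff, hj]))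
  -- key claim : small integral of fs n over small measurable sets
  have key : ∀ E' : Set X, MeasurableSet E' → μ E' ≤ ENNReal.ofReal δ →
      ∀ n : ℕ, |∫ x in E', fs n x ∂μ| ≤ 3 * ε₀ := by
    intro E' hE' hμE' n
    by_cases hnk : n ≤ k
    · have h1 : |∫ x in E', fs n x ∂μ| ≤ ∫ x in E', |fs n x| ∂μ := by
        simpa [Real.norm_eq_abs] using
          norm_integral_le_integral_norm (μ := μ.restrict E') (f := fs n)
      have h2 := hsmall n hnk E' hμE'
      linarith
    · have hkn : k ≤ n := le_of_not_ge hnk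
      have hdsmall : ∀ B : Set X, B ∆ E₀ ⊆ E' → (μ (B ∆ E₀)).toReal < r := by
        intro B hsub
        have h1 : μ (B ∆ E₀) ≤ ENNReal.ofReal δ := le_trans (measure_mono hsub) hμE'
        have h2 : (μ (B ∆ E₀)).toReal ≤ δ :=
          ENNReal.toReal_le_of_le_ofReal hδpos.le h1
        have h3 : δ ≤ r / 2 := min_le_right _ _
        linarith
      have hU : (E₀ ∪ E') ∆ E₀ ⊆ E' := by
        intro x hx
        rcases Set.mem_symmDiff.mp hx with ⟨h1, h2⟩ | ⟨h1, h2⟩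
        · rcases h1 with h | h
          · exact absurd h h2
          · exact h
        · exact absurd (Set.mem_union_left _ h1) h2
      have hD : (E₀ \ E') ∆ E₀ ⊆ E' := by
        intro x hx
        rcases Set.mem_symmDiff.mp hx with ⟨h1, h2⟩ | ⟨h1, h2⟩
        · exact absurd h1.1 h2
        · by_contra hxE'
          exact h2 ⟨h1, hxE'⟩
      have hUball := hball' (E₀ ∪ E') (hE₀.union hE') (hdsmall _ hU) k n le_rfl hkn
      have hDball := hball' (E₀ \ E') (hE₀.diff hE') (hdsmall _ hD) k n le_rfl hkn
      -- split : ∫_{E₀∪E'} f = ∫_{E₀\E'} f + ∫_{E'} f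
      have hsplit : ∀ j : ℕ, (∫ x in E₀ ∪ E', fs j x ∂μ)
          = (∫ x in E₀ \ E', fs j x ∂μ) + ∫ x in E', fs j x ∂μ := by
        intro j
        have := vc_split (hint j) (hE₀.union hE') hE'
        rwa [Set.union_diff_right, Set.union_inter_cancel_right] at this
      have halg : (∫ x in E', fs n x ∂μ) - ∫ x in E', fs k x ∂μ
          = ((∫ x in E₀ ∪ E', fs n x ∂μ) - ∫ x in E₀ ∪ E', fs k x ∂μ)
            - ((∫ x in E₀ \ E', fs n x ∂μ) - ∫ x in E₀ \ E', fs k x ∂μ) := by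
        have h1 := hsplit n
        have h2 := hsplit k
        linarith
      have hfk : |∫ x in E', fs k x ∂μ| ≤ ε₀ := by
        have h1 : |∫ x in E', fs k x ∂μ| ≤ ∫ x in E', |fs k x| ∂μ := by
          simpa [Real.norm_eq_abs] using
            norm_integral_le_integral_norm (μ := μ.restrict E') (f := fs k)
        exact le_trans h1 (hsmall k le_rfl E' hμE')
      calc |∫ x in E', fs n x ∂μ|
          ≤ |(∫ x in E', fs n x ∂μ) - ∫ x in E', fs k x ∂μ| + |∫ x in E', fs k x ∂μ| := by
            have := abs_sub_abs_le_abs_sub (∫ x in E', fs n x ∂μ) (∫ x in E', fs k x ∂μ)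
            have h2 := abs_add_le ((∫ x in E', fs n x ∂μ) - ∫ x in E', fs k x ∂μ)
              (∫ x in E', fs k x ∂μ)
            calc |∫ x in E', fs n x ∂μ|
                = |((∫ x in E', fs n x ∂μ) - ∫ x in E', fs k x ∂μ) + ∫ x in E', fs k x ∂μ| := by
                  ring_nf
              _ ≤ _ := h2
        _ ≤ (ε₀ + ε₀) + ε₀ := by
            refine add_le_add ?_ hfk
            rw [halg]
            calc |_| ≤ |(∫ x in E₀ ∪ E', fs n x ∂μ) - ∫ x in E₀ ∪ E', fs k x ∂μ|
                + |(∫ x in E₀ \ E', fs n x ∂μ) - ∫ x in E₀ \ E', fs k x ∂μ| :=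
                  abs_sub _ _
              _ ≤ ε₀ + ε₀ := add_le_add hUball hDball
        _ = 3 * ε₀ := by ring
  -- conclude : bound ∫_E |fs n| using positive/negative parts
  set φ := (hint n).1.mk (fs n) with hφdef
  have hφm : StronglyMeasurable φ := (hint n).1.stronglyMeasurable_mk
  have hφeq : fs n =ᵐ[μ] φ := (hint n).1.ae_eq_mk
  have hPm : MeasurableSet {x | 0 ≤ φ x} :=
    measurableSet_le measurable_const hφm.measurable
  set P := E ∩ {x | 0 ≤ φ x} with hPdef
  set N := E \ {x | 0 ≤ φ x} with hNdef
  have hPmeas : MeasurableSet P := hE.inter hPm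
  have hNmeas : MeasurableSet N := hE.diff hPm
  have hφint : Integrable φ μ := (hint n).congr hφeq
  have habs_eq : (∫ x in E, |fs n x| ∂μ) = ∫ x in E, |φ x| ∂μ :=
    integral_congr_ae (ae_restrict_of_ae (hφeq.mono fun x hx => by simp [hx]))
  have hsplitE : (∫ x in E, |φ x| ∂μ) = (∫ x in N, |φ x| ∂μ) + ∫ x in P, |φ x| ∂μ :=
    vc_split hφint.abs hE hPm
  have hPeq : (∫ x in P, |φ x| ∂μ) = ∫ x in P, φ x ∂μ :=
    setIntegral_congr_fun hPmeas fun x hx => abs_of_nonneg hx.2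
  have hNeq : (∫ x in N, |φ x| ∂μ) = - ∫ x in N, φ x ∂μ := by
    rw [← integral_neg]
    exact setIntegral_congr_fun hNmeas fun x hx => abs_of_neg (lt_of_not_ge hx.2)
  have hPf : (∫ x in P, φ x ∂μ) = ∫ x in P, fs n x ∂μ :=
    integral_congr_ae (ae_restrict_of_ae (hφeq.mono fun x hx => hx.symm))
  have hNf : (∫ x in N, φ x ∂μ) = ∫ x in N, fs n x ∂μ :=
    integral_congr_ae (ae_restrict_of_ae (hφeq.mono fun x hx => hx.symm))
  have hPkey := key P hPmeas (le_trans (measure_mono Set.inter_subset_left) hμE) n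
  have hNkey := key N hNmeas (le_trans (measure_mono Set.diff_subset) hμE) n
  have h1 : (∫ x in P, fs n x ∂μ) ≤ 3 * ε₀ := le_trans (le_abs_self _) hPkey
  have h2 : - (∫ x in N, fs n x ∂μ) ≤ 3 * ε₀ := le_trans (neg_le_abs _) hNkey
  calc (∫ x in E, |fs n x| ∂μ)
      = (∫ x in N, |φ x| ∂μ) + ∫ x in P, |φ x| ∂μ := by rw [habs_eq, hsplitE]
    _ = - (∫ x in N, fs n x ∂μ) + ∫ x in P, fs n x ∂μ := by rw [hPeq, hNeq, hPf, hNf]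
    _ ≤ 3 * ε₀ + 3 * ε₀ := add_le_add h2 h1
    _ = ε := by rw [hε₀def]; ring
end
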